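/- arXiv:1805.02447 — 2 statements merged into one kernel-verified Lean document; each statement's English description precedes it below -/
import Mathlib

section
/- (Discretization corollary.) There exists a finite set X of points of the terrain with |X| ≤ 2(n−1) such that for every set S of vertices of the terrain: if S two-sided guards every vertex of the terrain and every point of X, then S two-sided guards every point of the terrain [x₁, xₙ]. -/
/-- `p` sees `q` on terrain `T`: the segment joining `(p, T p)` and `(q, T q)`
lies on or above the graph of `T`. -/
def Sees (T : ℝ → ℝ) (p q : ℝ) : Prop :=
  ∀ t ∈ Set.Icc (0 : ℝ) 1, T ((1 - t) * p + t * q) ≤ (1 - t) * T p + t * T q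

/-- `v` left-guards `p`: `v` is on or to the left of `p` and sees `p`. -/
def LeftGuards (T : ℝ → ℝ) (v p : ℝ) : Prop := v ≤ p ∧ Sees T v p

/-- `v` right-guards `p`: `v` is on or to the right of `p` and sees `p`. -/
def RightGuards (T : ℝ → ℝ) (v p : ℝ) : Prop := p ≤ v ∧ Sees T v p

/-- A set `S` two-sided guards `p` if some member left-guards `p` and some member
right-guards `p`. -/
def TwoSidedGuards (T : ℝ → ℝ) (S : Set ℝ) (p : ℝ) : Prop :=
  (∃ v ∈ S, LeftGuards T v p) ∧ (∃ v ∈ S, RightGuards T v p)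

/-- A 1.5D terrain with `n + 1` vertices: an `x`-monotone polygonal chain, given by
strictly increasing vertex abscissas `x 0 < ⋯ < x n` and a height function `T` which is
continuous on `[x 0, x n]` and affine on each edge interval `[x j, x (j+1)]`. -/
structure Terrain (n : ℕ) where
  x : Fin (n + 1) → ℝ
  mono : StrictMono x
  T : ℝ → ℝ
  cont : ContinuousOn T (Set.Icc (x 0) (x (Fin.last n)))
  affine : ∀ j : Fin n, ∀ t ∈ Set.Icc (0 : ℝ) 1,
    T ((1 - t) * x j.castSucc + t * x j.succ) =
      (1 - t) * T (x j.castSucc) + t * T (x j.succ)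

noncomputable def lineThru (x₁ y₁ x₂ y₂ x : ℝ) : ℝ := y₁ + (x - x₁) * ((y₂ - y₁) / (x₂ - x₁))

lemma sees_iff (T : ℝ → ℝ) {v q : ℝ} (h : v < q) :
    Sees T v q ↔ ∀ x ∈ Set.Icc v q, T x ≤ lineThru v (T v) q (T q) x := by
  have hq : q - v ≠ 0 := ne_of_gt (by linarith)
  constructor
  · intro hs x hx
    have ht : (x - v)/(q - v) ∈ Set.Icc (0:ℝ) 1 := by
      constructor
      · apply div_nonneg <;> linarith [hx.1]
      · rw [div_le_one (by linarith)]; linarith [hx.2]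
    have := hs _ ht
    have e1 : (1 - (x - v)/(q - v)) * v + (x - v)/(q - v) * q = x := by
      field_simp; ring
    rw [e1] at this
    calc T x ≤ (1 - (x - v)/(q - v)) * T v + (x - v)/(q - v) * T q := this
      _ = lineThru v (T v) q (T q) x := by unfold lineThru; field_simp; ring
  · intro hs t ht
    have hx : (1 - t) * v + t * q ∈ Set.Icc v q := by
      constructor <;> nlinarith [ht.1, ht.2]
    have := hs _ hx
    calc T ((1 - t) * v + t * q) ≤ lineThru v (T v) q (T q) ((1 - t) * v + t * q) := this
      _ = (1 - t) * T v + t * T q := by unfold lineThru; field_simp; ring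

-- two affine functions: if f ≤ g at u and w then in between
lemma affine_between {α β γ δ u w x : ℝ} (h1 : α + β*u ≤ γ + δ*u) (h2 : α + β*w ≤ γ + δ*w)
    (hu : u ≤ x) (hw : x ≤ w) : α + β*x ≤ γ + δ*x := by
  rcases le_total β δ with h | h
  · nlinarith [mul_nonneg (sub_nonneg.2 hu) (sub_nonneg.2 h)]
  · nlinarith [mul_nonneg (sub_nonneg.2 hw) (sub_nonneg.2 h)]

-- extension beyond w: f ≤ g at u, g ≤ f at w (u < w), then g ≤ f for x ≥ w
lemma affine_extend {α β γ δ u w x : ℝ} (huw : u < w) (hwx : w ≤ x)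
    (h1 : α + β*u ≤ γ + δ*u) (h2 : γ + δ*w ≤ α + β*w) : γ + δ*x ≤ α + β*x := by
  nlinarith [mul_nonneg (sub_nonneg.2 hwx) (by linarith : (γ + δ*u) - (α + β*u) - ((γ + δ*w) - (α + β*w)) ≥ 0)]

lemma lineThru_left (x₁ y₁ x₂ y₂ : ℝ) : lineThru x₁ y₁ x₂ y₂ x₁ = y₁ := by
  unfold lineThru; ring

lemma lineThru_right {x₁ x₂ : ℝ} (y₁ y₂ : ℝ) (h : x₁ ≠ x₂) : lineThru x₁ y₁ x₂ y₂ x₂ = y₂ := by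
  unfold lineThru
  have : x₂ - x₁ ≠ 0 := sub_ne_zero.2 (Ne.symm h)
  field_simp
  ring

lemma claim1 (T : ℝ → ℝ) {a b v p q : ℝ} (hva : v ≤ a) (hap : a < p) (hpq : p ≤ q) (hqb : q ≤ b)
    (haff : ∀ x ∈ Set.Icc a b, T x = lineThru a (T a) b (T b) x)
    (hsee : Sees T v p) : Sees T v q := by
  have hvp : v < p := lt_of_le_of_lt hva hap
  have hvq : v < q := lt_of_lt_of_le hvp hpq
  have hab : a < b := lt_of_lt_of_le hap (le_trans hpq hqb)
  -- affine normal forms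
  set Lβ := (T b - T a)/(b - a) with hLβ
  set S1β := (T p - T v)/(p - v) with hS1β
  set S2β := (T q - T v)/(q - v) with hS2β
  have hL : ∀ x, lineThru a (T a) b (T b) x = (T a - a*Lβ) + Lβ * x := fun x => by
    unfold lineThru; ring
  have hS1 : ∀ x, lineThru v (T v) p (T p) x = (T v - v*S1β) + S1β * x := fun x => by
    unfold lineThru; ring
  have hS2 : ∀ x, lineThru v (T v) q (T q) x = (T v - v*S2β) + S2β * x := fun x => by
    unfold lineThru; ring
  have hs1 := (sees_iff T hvp).1 hsee
  -- s1 a ≥ ℓ a = T a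
  have hTa : T a = lineThru a (T a) b (T b) a := haff a ⟨le_refl a, le_of_lt hab⟩
  have h_a : lineThru a (T a) b (T b) a ≤ lineThru v (T v) p (T p) a := by
    rw [lineThru_left]
    exact hs1 a ⟨hva, le_of_lt hap⟩
  -- s1 p = T p = ℓ p
  have hS1p : lineThru v (T v) p (T p) p = T p := lineThru_right _ _ (ne_of_lt hvp)
  have hLp : T p = lineThru a (T a) b (T b) p := haff p ⟨le_of_lt hap, le_trans hpq hqb⟩
  -- beyond p : s1 ≤ ℓ, at q
  have h_q : lineThru v (T v) p (T p) q ≤ lineThru a (T a) b (T b) q := by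
    rw [hL, hS1]
    apply affine_extend hap hpq
    · have h := h_a; rw [hL, hS1] at h; exact h
    · have h : lineThru v (T v) p (T p) p ≤ lineThru a (T a) b (T b) p := by
        rw [hS1p, hLp]
      rw [hL, hS1] at h; exact h
  have hTq : T q = lineThru a (T a) b (T b) q := haff q ⟨le_trans (le_of_lt hap) hpq, hqb⟩
  -- s2 ≥ s1 on [v,q]
  have hs12 : ∀ x ∈ Set.Icc v q, lineThru v (T v) p (T p) x ≤ lineThru v (T v) q (T q) x := by
    intro x hx
    rw [hS1, hS2]
    apply affine_between _ _ hx.1 hx.2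
    · rw [← hS1, ← hS2, lineThru_left, lineThru_left]
    · have h : lineThru v (T v) p (T p) q ≤ lineThru v (T v) q (T q) q := by
        rw [lineThru_right _ _ (ne_of_lt hvq), hTq]; exact h_q
      rw [hS1, hS2] at h; exact h
  rw [sees_iff T hvq]
  intro x hx
  rcases le_or_gt x p with hxp | hpx
  · exact le_trans (hs1 x ⟨hx.1, hxp⟩) (hs12 x hx)
  · have hTx : T x = lineThru a (T a) b (T b) x :=
      haff x ⟨le_of_lt (lt_trans hap hpx), le_trans hx.2 hqb⟩
    rw [hTx]
    -- ℓ ≤ s2 on [p,q]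
    rw [hL, hS2]
    apply affine_between (u := p) (w := q) _ _ (le_of_lt hpx) hx.2
    · have h : lineThru a (T a) b (T b) p ≤ lineThru v (T v) q (T q) p := by
        rw [← hLp, ← hS1p]; exact hs12 p ⟨le_of_lt hvp, hpq⟩
      rw [hL, hS2] at h; exact h
    · have h : lineThru a (T a) b (T b) q ≤ lineThru v (T v) q (T q) q := by
        rw [lineThru_right _ _ (ne_of_lt hvq), hTq]
      rw [hL, hS2] at h; exact h

lemma sees_neg (T : ℝ → ℝ) (v q : ℝ) : Sees T v q ↔ Sees (fun y => T (-y)) (-v) (-q) := by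
  constructor <;> intro h t ht <;> have h' := h t ht
  · show T (-((1 - t) * -v + t * -q)) ≤ (1 - t) * T (-(-v)) + t * T (-(-q))
    have e : -((1 - t) * -v + t * -q) = (1 - t) * v + t * q := by ring
    rw [e, neg_neg, neg_neg]; exact h'
  · have e : -((1 - t) * -v + t * -q) = (1 - t) * v + t * q := by ring
    show T ((1 - t) * v + t * q) ≤ (1 - t) * T v + t * T q
    rw [← e]
    have h'' : T (-((1 - t) * -v + t * -q)) ≤ (1 - t) * T (-(-v)) + t * T (-(-q)) := h'
    rw [neg_neg, neg_neg] at h''; exact h''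

lemma claim1R (T : ℝ → ℝ) {a b v p q : ℝ} (hbv : b ≤ v) (hpb : p < b) (hqp : q ≤ p) (haq : a ≤ q)
    (haff : ∀ x ∈ Set.Icc a b, T x = lineThru a (T a) b (T b) x)
    (hsee : Sees T v p) : Sees T v q := by
  rw [sees_neg] at hsee ⊢
  have hab : a < b := lt_of_le_of_lt (le_trans haq hqp) hpb
  have hba : b - a ≠ 0 := ne_of_gt (by linarith)
  refine claim1 (fun y => T (-y)) (a := -b) (b := -a)
    (neg_le_neg hbv) (neg_lt_neg hpb) (neg_le_neg hqp) (neg_le_neg haq) ?_ hsee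
  intro y hy
  have hy' : -y ∈ Set.Icc a b := ⟨by linarith [hy.2], by linarith [hy.1]⟩
  show T (-y) = lineThru (-b) (T (-(-b))) (-a) (T (-(-a))) y
  rw [neg_neg, neg_neg, haff _ hy']
  unfold lineThru
  have e : (-a) - (-b) = b - a := by ring
  rw [e]
  field_simp
  ring

variable {n : ℕ}

lemma Terrain.edge_lt (Ter : Terrain n) (j : Fin n) : Ter.x j.castSucc < Ter.x j.succ :=
  Ter.mono Fin.castSucc_lt_succ

lemma affine_cf (Ter : Terrain n) (j : Fin n) :
    ∀ x ∈ Set.Icc (Ter.x j.castSucc) (Ter.x j.succ),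
      Ter.T x = lineThru (Ter.x j.castSucc) (Ter.T (Ter.x j.castSucc))
        (Ter.x j.succ) (Ter.T (Ter.x j.succ)) x := by
  intro x hx
  have hab : Ter.x j.castSucc < Ter.x j.succ := Ter.edge_lt j
  set a := Ter.x j.castSucc
  set b := Ter.x j.succ
  have hba : b - a ≠ 0 := ne_of_gt (by linarith)
  have ht : (x - a)/(b - a) ∈ Set.Icc (0:ℝ) 1 := by
    constructor
    · apply div_nonneg <;> linarith [hx.1]
    · rw [div_le_one (by linarith)]; linarith [hx.2]
  have := Ter.affine j _ ht
  have e : (1 - (x - a)/(b - a)) * a + (x - a)/(b - a) * b = x := by field_simp; ring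
  rw [e] at this
  rw [this]; unfold lineThru; field_simp; ring

noncomputable def brkL (T : ℝ → ℝ) (v a b : ℝ) : ℝ := sInf {p : ℝ | p ∈ Set.Ioc a b ∧ Sees T v p}
noncomputable def brkR (T : ℝ → ℝ) (v a b : ℝ) : ℝ := sSup {p : ℝ | p ∈ Set.Ico a b ∧ Sees T v p}

noncomputable def mL (Ter : Terrain n) (j : Fin n) : ℝ :=
  Finset.univ.inf' Finset.univ_nonempty fun i : Fin (n+1) =>
    if Ter.x j.castSucc < brkL Ter.T (Ter.x i) (Ter.x j.castSucc) (Ter.x j.succ)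
    then min (brkL Ter.T (Ter.x i) (Ter.x j.castSucc) (Ter.x j.succ)) (Ter.x j.succ)
    else Ter.x j.succ

noncomputable def mR (Ter : Terrain n) (j : Fin n) : ℝ :=
  Finset.univ.sup' Finset.univ_nonempty fun i : Fin (n+1) =>
    if brkR Ter.T (Ter.x i) (Ter.x j.castSucc) (Ter.x j.succ) < Ter.x j.succ
    then max (brkR Ter.T (Ter.x i) (Ter.x j.castSucc) (Ter.x j.succ)) (Ter.x j.castSucc)
    else Ter.x j.castSucc

noncomputable def wL (Ter : Terrain n) (j : Fin n) : ℝ := (Ter.x j.castSucc + mL Ter j) / 2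
noncomputable def wR (Ter : Terrain n) (j : Fin n) : ℝ := (mR Ter j + Ter.x j.succ) / 2

lemma mL_mem (Ter : Terrain n) (j : Fin n) :
    mL Ter j ∈ Set.Ioc (Ter.x j.castSucc) (Ter.x j.succ) := by
  constructor
  · rw [mL, Finset.lt_inf'_iff]
    intro i _
    split_ifs with h
    · exact lt_min h (Ter.edge_lt j)
    · exact Ter.edge_lt j
  · refine le_trans (Finset.inf'_le _ (Finset.mem_univ 0)) ?_
    split_ifs
    · exact min_le_right _ _
    · exact le_refl _

lemma mR_mem (Ter : Terrain n) (j : Fin n) :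
    mR Ter j ∈ Set.Ico (Ter.x j.castSucc) (Ter.x j.succ) := by
  constructor
  · refine le_trans ?_ (Finset.le_sup' _ (Finset.mem_univ 0))
    split_ifs
    · exact le_max_right _ _
    · exact le_refl _
  · rw [mR, Finset.sup'_lt_iff]
    intro i _
    split_ifs with h
    · exact max_lt h (Ter.edge_lt j)
    · exact Ter.edge_lt j

lemma wL_mem (Ter : Terrain n) (j : Fin n) :
    wL Ter j ∈ Set.Ioo (Ter.x j.castSucc) (Ter.x j.succ) := by
  have h := mL_mem Ter j
  constructor
  · rw [wL]; linarith [h.1]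
  · rw [wL]; linarith [h.1, h.2]

lemma wR_mem (Ter : Terrain n) (j : Fin n) :
    wR Ter j ∈ Set.Ioo (Ter.x j.castSucc) (Ter.x j.succ) := by
  have h := mR_mem Ter j
  constructor
  · rw [wR]; linarith [h.1, h.2]
  · rw [wR]; linarith [h.2]

lemma left_main (Ter : Terrain n) (j : Fin n) (i : Fin (n+1))
    (hva : Ter.x i ≤ Ter.x j.castSucc) (hsee : Sees Ter.T (Ter.x i) (wL Ter j)) :
    ∀ q ∈ Set.Ioc (Ter.x j.castSucc) (Ter.x j.succ), Sees Ter.T (Ter.x i) q := by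
  set a := Ter.x j.castSucc with ha
  set b := Ter.x j.succ with hb
  set Sv := {p : ℝ | p ∈ Set.Ioc a b ∧ Sees Ter.T (Ter.x i) p} with hSv
  have hbrk : brkL Ter.T (Ter.x i) a b = sInf Sv := rfl
  have hwmem : wL Ter j ∈ Sv := ⟨Set.mem_Ioc.2 ⟨(wL_mem Ter j).1, le_of_lt (wL_mem Ter j).2⟩, hsee⟩
  have hbdd : BddBelow Sv := ⟨a, fun p hp => le_of_lt hp.1.1⟩
  have ht_le : sInf Sv ≤ wL Ter j := csInf_le hbdd hwmem
  have ht_a : sInf Sv ≤ a := by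
    by_contra hlt
    push_neg at hlt
    have h1 : mL Ter j ≤ min (brkL Ter.T (Ter.x i) a b) b := by
      refine le_trans (Finset.inf'_le _ (Finset.mem_univ i)) ?_
      rw [if_pos (by rw [hbrk]; exact hlt)]
    have h2 : wL Ter j < mL Ter j := by
      rw [wL]; linarith [(mL_mem Ter j).1]
    have h3 : mL Ter j ≤ sInf Sv := le_trans h1 (by rw [← hbrk]; exact min_le_left _ _)
    linarith
  intro q hq
  have hlt : sInf Sv < q := lt_of_le_of_lt ht_a hq.1
  obtain ⟨p, hpSv, hpq⟩ := exists_lt_of_csInf_lt ⟨wL Ter j, hwmem⟩ hlt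
  exact claim1 Ter.T hva hpSv.1.1 (le_of_lt hpq) hq.2 (affine_cf Ter j) hpSv.2

lemma right_main (Ter : Terrain n) (j : Fin n) (i : Fin (n+1))
    (hvb : Ter.x j.succ ≤ Ter.x i) (hsee : Sees Ter.T (Ter.x i) (wR Ter j)) :
    ∀ q ∈ Set.Ico (Ter.x j.castSucc) (Ter.x j.succ), Sees Ter.T (Ter.x i) q := by
  set a := Ter.x j.castSucc with ha
  set b := Ter.x j.succ with hb
  set Sv := {p : ℝ | p ∈ Set.Ico a b ∧ Sees Ter.T (Ter.x i) p} with hSv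
  have hbrk : brkR Ter.T (Ter.x i) a b = sSup Sv := rfl
  have hwmem : wR Ter j ∈ Sv := ⟨Set.mem_Ico.2 ⟨le_of_lt (wR_mem Ter j).1, (wR_mem Ter j).2⟩, hsee⟩
  have hbdd : BddAbove Sv := ⟨b, fun p hp => le_of_lt hp.1.2⟩
  have ht_le : wR Ter j ≤ sSup Sv := le_csSup hbdd hwmem
  have ht_b : b ≤ sSup Sv := by
    by_contra hlt
    push_neg at hlt
    have h1 : max (brkR Ter.T (Ter.x i) a b) a ≤ mR Ter j := by
      refine le_trans ?_ (Finset.le_sup' _ (Finset.mem_univ i))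
      rw [if_pos (by rw [hbrk]; exact hlt)]
    have h2 : mR Ter j < wR Ter j := by
      rw [wR]; linarith [(mR_mem Ter j).2]
    have h3 : sSup Sv ≤ mR Ter j := le_trans (by rw [← hbrk]; exact le_max_left _ _) h1
    linarith
  intro q hq
  have hlt : q < sSup Sv := lt_of_lt_of_le hq.2 ht_b
  obtain ⟨p, hpSv, hpq⟩ := exists_lt_of_lt_csSup ⟨wR Ter j, hwmem⟩ hlt
  exact claim1R Ter.T hvb hpSv.1.2 (le_of_lt hpq) hq.1 (affine_cf Ter j) hpSv.2

lemma exists_edge (Ter : Terrain n) (hn : 1 ≤ n) {p : ℝ}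
    (hp : p ∈ Set.Icc (Ter.x 0) (Ter.x (Fin.last n))) :
    ∃ j : Fin n, Ter.x j.castSucc ≤ p ∧ p ≤ Ter.x j.succ := by
  classical
  set K := Finset.univ.filter (fun i : Fin (n+1) => Ter.x i ≤ p) with hK
  have hKne : K.Nonempty := ⟨0, by simp [hK, hp.1]⟩
  set k := K.max' hKne with hk
  have hk_le : Ter.x k ≤ p := by
    have := K.max'_mem hKne
    simp [hK] at this
    exact this
  by_cases hkn : (k : ℕ) < n
  · refine ⟨⟨(k : ℕ), hkn⟩, ?_, ?_⟩
    · have e : (⟨(k : ℕ), hkn⟩ : Fin n).castSucc = k := Fin.ext rfl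
      rw [e]; exact hk_le
    · by_contra h
      push_neg at h
      have hmem : (⟨(k : ℕ), hkn⟩ : Fin n).succ ∈ K := by
        simp [hK]; exact le_of_lt h
      have hle := K.le_max' _ hmem
      have : (k : ℕ) + 1 ≤ (k : ℕ) := by
        have := (Fin.le_def).1 hle
        exact this
      omega
  · have hkl : k = Fin.last n := Fin.ext (by
      have := k.isLt
      simp only [Fin.val_last]
      omega)
    have hpl : p = Ter.x (Fin.last n) := le_antisymm hp.2 (by rw [← hkl]; exact hk_le)
    refine ⟨⟨n - 1, by omega⟩, ?_, ?_⟩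
    · refine le_trans ?_ (le_of_eq hpl.symm)
      exact Ter.mono.monotone (by
        rw [Fin.le_def]
        simp only [Fin.coe_castSucc, Fin.val_last]
        omega)
    · have e : (⟨n - 1, by omega⟩ : Fin n).succ = Fin.last n := Fin.ext (by
        simp only [Fin.val_succ, Fin.val_last]
        omega)
      rw [e, hpl]


/-- **Discretization corollary.** There is a finite set `X` of points of the terrain, of
cardinality at most `2 * n` (that is, twice the number of vertices minus one), such that any
vertex set `S` that two-sided guards all vertices and all points of `X` two-sided guards
every point of the terrain. -/
theorem discretization {n : ℕ} (Ter : Terrain n) (hn : 1 ≤ n) :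
    ∃ X : Finset ℝ,
      (↑X : Set ℝ) ⊆ Set.Icc (Ter.x 0) (Ter.x (Fin.last n)) ∧
      X.card ≤ 2 * n ∧
      ∀ S : Set ℝ, S ⊆ Set.range Ter.x →
        (∀ v ∈ Set.range Ter.x, TwoSidedGuards Ter.T S v) →
        (∀ p ∈ X, TwoSidedGuards Ter.T S p) →
        ∀ p ∈ Set.Icc (Ter.x 0) (Ter.x (Fin.last n)), TwoSidedGuards Ter.T S p := by
  classical
  refine ⟨(Finset.univ.image (wL Ter)) ∪ (Finset.univ.image (wR Ter)), ?_, ?_, ?_⟩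
  · intro r hr
    simp only [Finset.coe_union, Finset.coe_image, Finset.coe_univ, Set.image_univ,
      Set.mem_union, Set.mem_range] at hr
    have key : ∀ j : Fin n, ∀ r ∈ Set.Ioo (Ter.x j.castSucc) (Ter.x j.succ),
        r ∈ Set.Icc (Ter.x 0) (Ter.x (Fin.last n)) := by
      intro j r hrj
      constructor
      · exact le_trans (Ter.mono.monotone (Fin.zero_le _)) (le_of_lt hrj.1)
      · exact le_trans (le_of_lt hrj.2) (Ter.mono.monotone (Fin.le_last _))
    rcases hr with ⟨j, rfl⟩ | ⟨j, rfl⟩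
    · exact key j _ (wL_mem Ter j)
    · exact key j _ (wR_mem Ter j)
  · refine le_trans (Finset.card_union_le _ _) ?_
    have h1 := Finset.card_image_le (s := (Finset.univ : Finset (Fin n))) (f := wL Ter)
    have h2 := Finset.card_image_le (s := (Finset.univ : Finset (Fin n))) (f := wR Ter)
    simp only [Finset.card_univ, Fintype.card_fin] at h1 h2
    omega
  · intro S hS hV hX p hp
    by_cases hpr : p ∈ Set.range Ter.x
    · exact hV p hpr
    obtain ⟨j, hj1, hj2⟩ := exists_edge Ter hn hp
    have ha : Ter.x j.castSucc < p := lt_of_le_of_ne hj1 (fun h => hpr ⟨j.castSucc, h⟩)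
    have hb : p < Ter.x j.succ := lt_of_le_of_ne hj2 (fun h => hpr ⟨j.succ, h.symm⟩)
    have hwLX : wL Ter j ∈ (Finset.univ.image (wL Ter)) ∪ (Finset.univ.image (wR Ter)) :=
      Finset.mem_union.2 (Or.inl (Finset.mem_image.2 ⟨j, Finset.mem_univ j, rfl⟩))
    have hwRX : wR Ter j ∈ (Finset.univ.image (wL Ter)) ∪ (Finset.univ.image (wR Ter)) :=
      Finset.mem_union.2 (Or.inr (Finset.mem_image.2 ⟨j, Finset.mem_univ j, rfl⟩))
    constructor
    · obtain ⟨⟨v, hvS, hvle, hvsee⟩, _⟩ := hX (wL Ter j) hwLX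
      obtain ⟨i, rfl⟩ := hS hvS
      have hvi : Ter.x i ≤ Ter.x j.castSucc := by
        have h1 : Ter.x i < Ter.x j.succ := lt_of_le_of_lt hvle (wL_mem Ter j).2
        have h2 : i < j.succ := Ter.mono.lt_iff_lt.mp h1
        exact Ter.mono.monotone (Fin.le_castSucc_iff.mpr h2)
      exact ⟨Ter.x i, hvS, le_trans hvi (le_of_lt ha),
        left_main Ter j i hvi hvsee p ⟨ha, hj2⟩⟩
    · obtain ⟨_, ⟨v, hvS, hvge, hvsee⟩⟩ := hX (wR Ter j) hwRX
      obtain ⟨i, rfl⟩ := hS hvS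
      have hvi : Ter.x j.succ ≤ Ter.x i := by
        have h1 : Ter.x j.castSucc < Ter.x i := lt_of_lt_of_le (wR_mem Ter j).1 hvge
        have h2 : j.castSucc < i := Ter.mono.lt_iff_lt.mp h1
        exact Ter.mono.monotone (Fin.castSucc_lt_iff_succ_le.mp h2)
      exact ⟨Ter.x i, hvS, le_trans (le_of_lt hb) hvi,
        right_main Ter j i hvi hvsee p ⟨hj1, hb⟩⟩
end

section
/- (Lemma 6.) Let S = {o₁, …, o_m} with o₁ < ⋯ < o_m be a set of vertices that two-sided guards every point of the terrain, let 1 ≤ i ≤ m, let N be the leftmost point not left-guarded by {o₁, …, o_i}, and let l = L(N) be the leftmost vertex that sees N. Suppose l ∉ O_L(N). Then for every point x of the terrain with x < l and every g ∈ O_L(N), g does not right-guard x (i.e., g does not see x). -/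
lemma Sees.symm {T : ℝ → ℝ} {p q : ℝ} (h : Sees T p q) : Sees T q p := by
  intro t ht
  have h1 := h (1 - t) ⟨by linarith [ht.2], by linarith [ht.1]⟩
  have e1 : (1 - (1 - t)) * p + (1 - t) * q = (1 - t) * q + t * p := by ring
  rw [e1] at h1
  have e2 : (1 - (1 - t)) * T p + (1 - t) * T q = (1 - t) * T q + t * T p := by ring
  linarith [h1, e2.le, e2.ge]

lemma sees_iff_cleared {T : ℝ → ℝ} {a b : ℝ} (hab : a < b) :
    Sees T a b ↔ ∀ y ∈ Set.Icc a b, (b - a) * T y ≤ (b - y) * T a + (y - a) * T b := by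
  have hba : (0:ℝ) < b - a := by linarith
  constructor
  · intro h y hy
    have ht : (y - a) / (b - a) ∈ Set.Icc (0:ℝ) 1 :=
      ⟨div_nonneg (by linarith [hy.1]) hba.le, by
        rw [div_le_one hba]; linarith [hy.2]⟩
    have h1 := h _ ht
    have e : (1 - (y - a)/(b-a)) * a + (y - a)/(b-a) * b = y := by
      field_simp; ring
    rw [e] at h1
    have h2 := mul_le_mul_of_nonneg_left h1 hba.le
    have e2 : (b - a) * ((1 - (y - a)/(b-a)) * T a + (y - a)/(b-a) * T b)
        = (b - y) * T a + (y - a) * T b := by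
      field_simp; ring
    linarith [e2.le, e2.ge]
  · intro h t ht
    set y := (1 - t) * a + t * b with hy
    have hy1 : a ≤ y := by nlinarith [ht.1, ht.2]
    have hy2 : y ≤ b := by nlinarith [ht.1, ht.2]
    have h1 := h y ⟨hy1, hy2⟩
    have e : (b - y) * T a + (y - a) * T b = (b - a) * ((1 - t) * T a + t * T b) := by
      rw [hy]; ring
    rw [e] at h1
    exact le_of_mul_le_mul_left h1 hba

lemma order_claim {T : ℝ → ℝ} {a b c d : ℝ} (hab : a ≤ b) (hbc : b < c) (hcd : c ≤ d)
    (hac : Sees T a c) (hbd : Sees T b d) : Sees T a d := by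
  have hac' := (sees_iff_cleared (lt_of_le_of_lt hab hbc)).1 hac
  have hbd' := (sees_iff_cleared (lt_of_lt_of_le hbc hcd)).1 hbd
  have had : a < d := by linarith
  rw [sees_iff_cleared had]
  intro y hy
  have K1 := hac' b ⟨hab, hbc.le⟩
  have K2 := hbd' c ⟨hbc.le, hcd⟩
  have A1 : 0 ≤ (c-b) * T a + (b-a) * T c - (c-a) * T b := by linarith
  have A2 : 0 ≤ (d-c) * T b + (c-b) * T d - (d-b) * T c := by linarith
  have hW : 0 ≤ (c - a) * T d + (d - c) * T a - (d - a) * T c := by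
    nlinarith [mul_nonneg (by linarith : (0:ℝ) ≤ d - c) A1,
      mul_nonneg (by linarith : (0:ℝ) ≤ c - a) A2, hbc]
  have hW2 : 0 ≤ (d - b) * T a - (d - a) * T b + (b - a) * T d := by
    nlinarith [mul_nonneg (by linarith : (0:ℝ) ≤ d - b) A1,
      mul_nonneg (by linarith : (0:ℝ) ≤ b - a) A2, hbc]
  rcases le_total y c with hyc | hyc
  · have H := hac' y ⟨hy.1, hyc⟩
    nlinarith [mul_nonneg (by linarith [hy.1] : (0:ℝ) ≤ y - a) hW,
      mul_le_mul_of_nonneg_left H (by linarith : (0:ℝ) ≤ d - a), hbc]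
  · have H := hbd' y ⟨by linarith, hy.2⟩
    nlinarith [mul_nonneg (by linarith [hy.2] : (0:ℝ) ≤ d - y) hW2,
      mul_le_mul_of_nonneg_left H (by linarith : (0:ℝ) ≤ d - a), hbc]

lemma affine_cleared {T : ℝ → ℝ} {a b : ℝ} (hab : a < b)
    (h : ∀ t ∈ Set.Icc (0:ℝ) 1, T ((1 - t) * a + t * b) = (1 - t) * T a + t * T b) :
    ∀ y ∈ Set.Icc a b, (b - a) * T y = (b - y) * T a + (y - a) * T b := by
  have hba : (0:ℝ) < b - a := by linarith
  intro y hy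
  have ht : (y - a) / (b - a) ∈ Set.Icc (0:ℝ) 1 :=
    ⟨div_nonneg (by linarith [hy.1]) hba.le, by
      rw [div_le_one hba]; linarith [hy.2]⟩
  have h1 := h _ ht
  have e : (1 - (y - a)/(b-a)) * a + (y - a)/(b-a) * b = y := by
    field_simp; ring
  rw [e] at h1
  have e2 : (b - a) * ((1 - (y - a)/(b-a)) * T a + (y - a)/(b-a) * T b)
      = (b - y) * T a + (y - a) * T b := by
    field_simp; ring
  rw [h1]
  exact e2

lemma vertex_sees {n : ℕ} (Ter : Terrain n) {p N : ℝ}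
    (hp0 : Ter.x 0 ≤ p) (hpN : p < N) (hNlast : N ≤ Ter.x (Fin.last n))
    (hsees : Sees Ter.T p N) :
    ∃ v ∈ Set.range Ter.x, v ≤ p ∧ Sees Ter.T v N := by
  classical
  set s : Finset (Fin (n+1)) := Finset.univ.filter (fun k => Ter.x k ≤ p) with hs
  have h0s : (0 : Fin (n+1)) ∈ s := by simp [hs, hp0]
  have hsne : s.Nonempty := ⟨0, h0s⟩
  set j : Fin (n+1) := s.max' hsne with hj
  have hjs : j ∈ s := s.max'_mem hsne
  have hjp : Ter.x j ≤ p := by simpa [hs] using hjs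
  -- j is not the last vertex
  have hjlt : (j : ℕ) < n := by
    by_contra h
    push_neg at h
    have : j = Fin.last n := by
      apply Fin.ext
      have := j.isLt
      simp [Fin.last]
      omega
    rw [this] at hjp
    linarith
  set j' : Fin n := ⟨(j : ℕ), hjlt⟩ with hj'
  have hcast : j'.castSucc = j := by
    apply Fin.ext; simp [hj']
  have hab : Ter.x j < Ter.x j'.succ := by
    rw [← hcast]; exact Ter.mono (Fin.castSucc_lt_succ : j'.castSucc < j'.succ)
  have hpb : p < Ter.x j'.succ := by
    by_contra h
    push_neg at h
    have hmem : j'.succ ∈ s := by simp [hs, h]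
    have := s.le_max' _ hmem
    rw [← hj] at this
    have hlt : j < j'.succ := by rw [← hcast]; exact (Fin.castSucc_lt_succ : j'.castSucc < j'.succ)
    exact absurd this (not_le.2 hlt)
  set a := Ter.x j with ha
  set b := Ter.x j'.succ with hb
  -- if p is itself a vertex we are done
  rcases eq_or_lt_of_le hjp with heq | hap
  · exact ⟨p, ⟨j, heq⟩, le_refl p, hsees⟩
  -- edge affine identity
  have Hedge : ∀ y ∈ Set.Icc a b, (b - a) * Ter.T y = (b - y) * Ter.T a + (y - a) * Ter.T b := by
    have := Ter.affine j'
    rw [hcast] at this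
    exact affine_cleared hab this
  have Hp := (sees_iff_cleared hpN).1 hsees
  have E1 := Hedge p ⟨hjp, hpb.le⟩
  -- Fact F : the vertex a lies on or above the line through (p, T p) and (N, T N)
  have F : (N - a) * Ter.T p ≤ (N - p) * Ter.T a + (p - a) * Ter.T N := by
    rcases le_or_gt N b with hNb | hbN
    · -- p and N on the same edge: exact collinearity
      have E2 := Hedge N ⟨by linarith, hNb⟩
      have key : (b - a) * ((N - a) * Ter.T p - (p - a) * Ter.T N - (N - p) * Ter.T a) = 0 := by
        linear_combination (N - a) * E1 - (p - a) * E2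
      have hba : b - a ≠ 0 := by linarith
      have := (mul_eq_zero.1 key).resolve_left hba
      linarith
    · -- otherwise b is strictly between p and N
      by_contra hcon
      push_neg at hcon
      have HB := Hp b ⟨hpb.le, hbN.le⟩
      have t1 : 0 ≤ (p - a) * ((N - b) * Ter.T p + (b - p) * Ter.T N - (N - p) * Ter.T b) :=
        mul_nonneg (by linarith) (by linarith)
      have t2 : 0 < (b - p) * ((N - a) * Ter.T p - (N - p) * Ter.T a - (p - a) * Ter.T N) :=
        mul_pos (by linarith) (by linarith)
      have t3 : (N - p) * ((b - a) * Ter.T p) = (N - p) * ((b - p) * Ter.T a + (p - a) * Ter.T b) := by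
        rw [E1]
      nlinarith [t1, t2, t3]
  refine ⟨a, ⟨j, rfl⟩, hjp, ?_⟩
  have haN : a < N := by linarith
  rw [sees_iff_cleared haN]
  intro y hy
  rcases le_total y p with hyp | hyp
  · -- y on the edge, between a and p
    have Ey := Hedge y ⟨hy.1, by linarith⟩
    have key : (b - a) * ((p - a) * Ter.T y - (p - y) * Ter.T a - (y - a) * Ter.T p) = 0 := by
      linear_combination (p - a) * Ey - (y - a) * E1
    have hba : b - a ≠ 0 := by linarith
    have interp := (mul_eq_zero.1 key).resolve_left hba
    have t1 := mul_le_mul_of_nonneg_left F (by linarith [hy.1] : (0:ℝ) ≤ y - a)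
    -- cancel (p - a) > 0
    by_contra hcon
    push_neg at hcon
    have t2 : (p - a) * ((N - y) * Ter.T a + (y - a) * Ter.T N) < (p - a) * ((N - a) * Ter.T y) :=
      mul_lt_mul_of_pos_left hcon (by linarith)
    nlinarith [interp, t1, t2]
  · -- y between p and N
    have H := Hp y ⟨hyp, hy.2⟩
    have F' : 0 ≤ (N - p) * Ter.T a - (N - a) * Ter.T p + (p - a) * Ter.T N := by linarith
    have t1 : 0 ≤ (N - y) * ((N - p) * Ter.T a - (N - a) * Ter.T p + (p - a) * Ter.T N) :=
      mul_nonneg (by linarith [hy.2]) F'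
    have t2 := mul_le_mul_of_nonneg_left H (by linarith : (0:ℝ) ≤ N - a)
    by_contra hcon
    push_neg at hcon
    have t3 : (N - p) * ((N - y) * Ter.T a + (y - a) * Ter.T N) < (N - p) * ((N - a) * Ter.T y) :=
      mul_lt_mul_of_pos_left hcon (by linarith)
    nlinarith [t1, t2, t3]

/-- **Lemma 6.** With `N` the leftmost point not left-guarded by `{o 1, …, o i}` and
`l = L(N)` the leftmost vertex seeing `N`, if `l ∉ O_L(N)` then no guard of `O_L(N)`
can right-guard (indeed, see) any point strictly left of `l`. -/
theorem lemma6_cannot_guard_left {n m : ℕ} (Ter : Terrain n) (hn : 1 ≤ n)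
    (o : Fin m → ℝ) (ho_mono : StrictMono o)
    (ho_vert : ∀ k : Fin m, o k ∈ Set.range Ter.x)
    (ho_guard : ∀ p ∈ Set.Icc (Ter.x 0) (Ter.x (Fin.last n)),
      TwoSidedGuards Ter.T (Set.range o) p)
    (i : Fin m)
    (N : ℝ) (hN : N ∈ Set.Icc (Ter.x 0) (Ter.x (Fin.last n)))
    (hN_not : ∀ j : Fin m, j ≤ i → ¬ LeftGuards Ter.T (o j) N)
    (hN_min : ∀ p ∈ Set.Icc (Ter.x 0) (Ter.x (Fin.last n)), p < N →
      ∃ j : Fin m, j ≤ i ∧ LeftGuards Ter.T (o j) p)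
    (l : ℝ) (hl_vert : l ∈ Set.range Ter.x)
    (hl_sees : Sees Ter.T l N)
    (hl_min : ∀ v ∈ Set.range Ter.x, v < l → ¬ Sees Ter.T v N)
    (hl_not : ¬ (l ∈ Set.range o ∧ LeftGuards Ter.T l N)) :
    ∀ p ∈ Set.Icc (Ter.x 0) (Ter.x (Fin.last n)), p < l →
      ∀ g ∈ Set.range o, LeftGuards Ter.T g N → ¬ Sees Ter.T g p := by
  intro p hp hpl g hg hgN hSeesGp
  obtain ⟨k, hk⟩ := hg
  have hg_vert : g ∈ Set.range Ter.x := hk ▸ ho_vert k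
  have hg_sees : Sees Ter.T g N := hgN.2
  have hgle : g ≤ N := hgN.1
  have hlg : l ≤ g := by
    by_contra h
    push_neg at h
    exact hl_min g hg_vert h hg_sees
  have hlN : l ≤ N := le_trans hlg hgle
  have hlo : l ∉ Set.range o := fun h => hl_not ⟨h, hlN, hl_sees⟩
  have hlg' : l < g := lt_of_le_of_ne hlg (fun h => hlo (by rw [h]; exact ⟨k, hk⟩))
  have hpN_sees : Sees Ter.T p N :=
    order_claim hpl.le hlg' hgle hSeesGp.symm hl_sees
  have hpN : p < N := lt_of_lt_of_le hpl hlN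
  obtain ⟨v, hv_vert, hvp, hv_sees⟩ := vertex_sees Ter hp.1 hpN hN.2 hpN_sees
  exact hl_min v hv_vert (lt_of_le_of_lt hvp hpl) hv_sees
end
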